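/- A variety of implication zroupoids fails to contain the two-element algebra 2_b if and only if it satisfies the identity 0 = 0' (i.e., 0 = 0 → 0). Equivalently: an implication zroupoid A contains a subalgebra isomorphic to 2_b if and only if 0 ≠ 0 → 0 in A. -/

import Mathlib

theorem stmt_19 {A : Type*} (imp : A → A → A) (z : A)
    (hI : ∀ x y w : A,
      imp (imp x y) w = imp (imp (imp (imp w z) x) (imp (imp y w) z)) z)
    (h0 : imp (imp z z) z = z) :
    (∃ t : A, t ≠ z ∧ imp z z = t ∧ imp z t = t ∧ imp t t = t ∧ imp t z = z)
      ↔ z ≠ imp z z := by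
  constructor
  · rintro ⟨t, hne, ht, -, -, -⟩
    rw [ht]
    exact fun h => hne h.symm
  · intro hz
    have e0 := hI (imp (imp z (imp z z)) z) (imp (imp (imp (imp z z) z) z) z) (imp (imp (imp z (imp z z)) z) z)
    have e1 := hI (imp (imp (imp z z) z) z) (imp z z) (imp (imp (imp z z) z) z)
    have e2 := hI (imp (imp (imp z z) z) z) (imp z z) (imp (imp z z) (imp (imp z z) z))
    have e3 := hI (imp (imp (imp z z) z) z) (imp z (imp z z)) (imp (imp z (imp (imp z z) z)) z)
    have e4 := hI (imp (imp (imp z z) z) z) (imp z (imp z z)) (imp (imp (imp z z) (imp z z)) z)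
    have e5 := hI (imp (imp (imp z z) z) z) (imp (imp z z) z) z
    have e6 := hI (imp (imp (imp z z) z) z) (imp (imp z z) z) (imp z z)
    have e7 := hI (imp z (imp z (imp (imp z z) z))) (imp (imp z (imp z z)) z) (imp (imp (imp (imp z z) z) z) z)
    have e8 := hI (imp z (imp z (imp (imp z z) z))) (imp (imp z (imp (imp z z) z)) z) (imp (imp (imp (imp z z) z) z) z)
    have e9 := hI (imp z (imp z (imp (imp z z) z))) (imp (imp (imp z z) (imp z z)) z) (imp (imp z z) z)
    refine ⟨imp z z, fun h => hz h.symm, rfl, ?_, ?_, h0⟩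
    · grind
    · grind
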